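/- Let r be a prime and M a subspace of M_r(F_q) whose determinantal polynomial is irreducible but not absolutely irreducible. If A, B ∈ M with det A ≠ 0 and det B = 0, then A^{-1}B is nilpotent. -/

import Mathlib

open MvPolynomial

noncomputable section AuxDegree

variable {d : ℕ} {K : Type*} [CommRing K] [IsDomain K]

/-- graded lex order embedding -/
def grlexD {d : ℕ} (μ : Fin d →₀ ℕ) : ℕ ×ₗ Lex (Fin d →₀ ℕ) := toLex (μ.degree, toLex μ)

lemma grlexD_injective : Function.Injective (grlexD (d := d)) := by
  intro a b h
  have := congrArg (fun x => (ofLex x).2) h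
  simpa [grlexD] using this

lemma Finsupp.degree_add' (a b : Fin d →₀ ℕ) : (a + b).degree = a.degree + b.degree := by
  simp [Finsupp.degree_eq_weight_one, map_add]

lemma grlexD_add (a b : Fin d →₀ ℕ) : grlexD (a + b) = grlexD a + grlexD b := by
  unfold grlexD
  rw [Finsupp.degree_add' a b]
  rfl

omit [IsDomain K] in
lemma fst_grlexD_supDegree {p : MvPolynomial (Fin d) K} (hp : p ≠ 0) :
    (ofLex (AddMonoidAlgebra.supDegree grlexD p)).1 = p.totalDegree := by
  obtain ⟨μ, hμ, hd⟩ := AddMonoidAlgebra.exists_supDegree_mem_support grlexD hp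
  apply le_antisymm
  · rw [hd]
    exact MvPolynomial.le_totalDegree (by exact hμ)
  · rw [MvPolynomial.totalDegree]
    apply Finset.sup_le
    intro ν hν
    have h1 : grlexD ν ≤ AddMonoidAlgebra.supDegree grlexD p := Finset.le_sup (by exact hν)
    have h2 : (ofLex (grlexD ν)).1 ≤ (ofLex (AddMonoidAlgebra.supDegree grlexD p)).1 := by
      rcases (Prod.Lex.le_iff).1 h1 with h | ⟨h, _⟩
      · exact le_of_lt h
      · exact le_of_eq h
    exact h2

theorem MvPolynomial.totalDegree_mul_eq' {p q : MvPolynomial (Fin d) K} (hp : p ≠ 0) (hq : q ≠ 0) :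
    (p * q).totalDegree = p.totalDegree + q.totalDegree := by
  have hlc : AddMonoidAlgebra.leadingCoeff grlexD p * AddMonoidAlgebra.leadingCoeff grlexD q ≠ 0 := by
    apply mul_ne_zero <;>
      rwa [Ne, AddMonoidAlgebra.leadingCoeff_eq_zero grlexD_injective]
  have := AddMonoidAlgebra.supDegree_mul grlexD_injective grlexD_add hlc hp hq
  have hpq : p * q ≠ 0 := mul_ne_zero hp hq
  rw [← fst_grlexD_supDegree hpq, ← fst_grlexD_supDegree hp, ← fst_grlexD_supDegree hq, this]
  rfl

theorem MvPolynomial.totalDegree_prod_eq' {e : ℕ} {g : ℕ → MvPolynomial (Fin d) K}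
    (h : ∀ i, g i ≠ 0) :
    (∏ i ∈ Finset.range e, g i).totalDegree = ∑ i ∈ Finset.range e, (g i).totalDegree := by
  induction e with
  | zero => simp
  | succ e ih =>
    rw [Finset.prod_range_succ, Finset.sum_range_succ,
      MvPolynomial.totalDegree_mul_eq' (Finset.prod_ne_zero_iff.2 fun i _ => h i) (h e), ih]

theorem MvPolynomial.eq_C_of_totalDegree_eq_zero {p : MvPolynomial (Fin d) K}
    (h : p.totalDegree = 0) : p = C (coeff 0 p) := by
  have := (MvPolynomial.totalDegree_eq_zero_iff _ p).1 h
  ext μ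
  rcases eq_or_ne μ 0 with rfl | hμ
  · simp
  · rw [coeff_C, if_neg (Ne.symm hμ)]
    by_contra hc
    obtain ⟨x, hx⟩ := Finsupp.ne_iff.1 hμ
    exact hx (by simpa using this μ (by simpa using hc) x)

theorem MvPolynomial.exists_eq_C_of_isUnit {p : MvPolynomial (Fin d) K} (h : IsUnit p) :
    ∃ c : K, c ≠ 0 ∧ p = C c := by
  obtain ⟨v, hv⟩ := h.exists_right_inv
  have hp : p ≠ 0 := by rintro rfl; simp at hv
  have hv0 : v ≠ 0 := by rintro rfl; simp at hv
  have hdeg := MvPolynomial.totalDegree_mul_eq' hp hv0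
  rw [hv] at hdeg
  simp only [MvPolynomial.totalDegree_one] at hdeg
  have hpd : p.totalDegree = 0 := by omega
  refine ⟨coeff 0 p, ?_, MvPolynomial.eq_C_of_totalDegree_eq_zero hpd⟩
  intro h0
  rw [MvPolynomial.eq_C_of_totalDegree_eq_zero hpd, h0] at hp
  simp at hp

omit [IsDomain K] in
theorem MvPolynomial.totalDegree_map_eq_of_injective {S : Type*} [CommRing S]
    {f : K →+* S} (hf : Function.Injective f) (p : MvPolynomial (Fin d) K) :
    (MvPolynomial.map f p).totalDegree = p.totalDegree := by
  rw [MvPolynomial.totalDegree, MvPolynomial.totalDegree,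
    MvPolynomial.support_map_of_injective p hf]

/-- a polynomial of total degree ≤ 1 with zero constant coefficient is a linear form -/
theorem MvPolynomial.eq_linear_form {p : MvPolynomial (Fin d) K}
    (h1 : p.totalDegree ≤ 1) (h0 : coeff 0 p = 0) :
    p = ∑ j, C (coeff (Finsupp.single j 1) p) * X j := by
  classical
  ext μ
  rw [MvPolynomial.coeff_sum]
  simp only [coeff_C_mul, coeff_X']
  rcases eq_or_ne μ 0 with rfl | hμ0
  · rw [h0]
    rw [Finset.sum_eq_zero]
    intro j _
    rw [if_neg, mul_zero]
    intro hc
    have := congrArg (fun f => Finsupp.equivFunOnFinite f j) hc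
    simp at this
  rcases eq_or_ne (coeff μ p) 0 with hc | hc
  · rw [hc, Finset.sum_eq_zero]
    intro j _
    split_ifs with h
    · rw [mul_one, h]
      exact hc
    · rw [mul_zero]
  · -- μ is in the support, so degree μ ≤ 1, and μ ≠ 0 so μ = single j 1
    have hμs : μ ∈ p.support := by simpa using hc
    have hdeg : μ.degree ≤ 1 := by
      have := MvPolynomial.le_totalDegree hμs
      have h2 : (μ.sum fun _ e => e) = μ.degree := by
        rw [Finsupp.degree, Finsupp.sum]; rfl
      omega
    obtain ⟨j, hj⟩ : ∃ j, μ = Finsupp.single j 1 := by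
      obtain ⟨j, hjs⟩ := Finsupp.support_nonempty_iff.2 hμ0
      refine ⟨j, ?_⟩
      have hj1 : 1 ≤ μ j := Nat.one_le_iff_ne_zero.2 (Finsupp.mem_support_iff.1 hjs)
      have hdege : μ.degree = ∑ i ∈ μ.support, μ i := rfl
      have hsub : {j} ⊆ μ.support := by simpa using hjs
      have : ∑ i ∈ μ.support, μ i = μ j + ∑ i ∈ μ.support \ {j}, μ i := by
        rw [← Finset.sum_sdiff hsub]
        simp [add_comm]
      have hrest : ∑ i ∈ μ.support \ {j}, μ i = 0 := by omega
      have hμj : μ j = 1 := by omega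
      ext k
      rcases eq_or_ne k j with rfl | hk
      · simp [hμj]
      · rw [Finsupp.single_apply, if_neg (Ne.symm hk)]
        by_cases hks : k ∈ μ.support
        · have hks' : k ∈ μ.support \ {j} := by simp [hks, hk]
          have := Finset.sum_eq_zero_iff.1 hrest k hks'
          exact this
        · simpa using hks
    subst hj
    rw [Finset.sum_eq_single j]
    · rw [if_pos rfl, mul_one]
    · intro k _ hk
      rw [if_neg, mul_zero]
      intro hcon
      exact hk (by
        have := congrArg (fun f => Finsupp.equivFunOnFinite f k) hcon
        by_contra hkj
        simp [Finsupp.single_apply, Ne.symm hkj] at this)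
    · intro hj; simp at hj

end AuxDegree

section Core

variable {F : Type*} [Field F] [Fintype F] {d r : ℕ}

local notation "K" => AlgebraicClosure F

/-- every element of the algebraic closure of a finite field is fixed by some iterate
of the `q`-power map -/
lemma exists_iterate_pow_card_fix (x : K) :
    ∃ m : ℕ, 0 < m ∧ x ^ (Fintype.card F) ^ m = x := by
  have hint : IsIntegral F x := (Algebra.IsAlgebraic.isAlgebraic x).isIntegral
  haveI := IntermediateField.adjoin.finiteDimensional hint
  set E := IntermediateField.adjoin F ({x} : Set K) with hE
  haveI : Finite E := Module.finite_of_finite F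
  letI : Fintype E := Fintype.ofFinite E
  refine ⟨Module.finrank F E, Module.finrank_pos, ?_⟩
  have hcard : Fintype.card E = Fintype.card F ^ Module.finrank F E := Module.card_eq_pow_finrank
  have hxE : x ∈ E := by
    rw [hE]
    exact IntermediateField.subset_adjoin F _ rfl
  have hfix : (⟨x, hxE⟩ : E) ^ Fintype.card E = ⟨x, hxE⟩ := FiniteField.pow_card _
  have := congrArg (fun y : E => (y : K)) hfix
  simpa [hcard] using this

/-- fixed points of the `q`-power map on the algebraic closure lie in the base field -/
lemma mem_range_of_pow_card_fix (x : K) (hx : x ^ (Fintype.card F) = x) :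
    ∃ y : F, algebraMap F K y = x := by
  classical
  set q := Fintype.card F with hq
  set f : Polynomial K := Polynomial.X ^ q - Polynomial.X with hf
  have hq1 : 1 < q := Fintype.one_lt_card
  have hfne : f ≠ 0 := by
    have : f.natDegree = q := by
      rw [hf, Polynomial.natDegree_sub_eq_left_of_natDegree_lt, Polynomial.natDegree_X_pow]
      rw [Polynomial.natDegree_X, Polynomial.natDegree_X_pow]
      omega
    intro h0
    rw [h0] at this
    simp only [Polynomial.natDegree_zero] at this
    omega
  have hroot : ∀ z : K, z ^ q = z → z ∈ f.roots := by
    intro z hz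
    rw [Polynomial.mem_roots hfne]
    simp [hf, Polynomial.IsRoot, hz]
  set S := f.roots.toFinset with hS
  have hcardS : S.card ≤ q := by
    have h1 : S.card ≤ Multiset.card f.roots := Multiset.toFinset_card_le _
    have h2 : Multiset.card f.roots ≤ f.natDegree := Polynomial.card_roots' f
    have h3 : f.natDegree = q := by
      rw [hf, Polynomial.natDegree_sub_eq_left_of_natDegree_lt, Polynomial.natDegree_X_pow]
      rw [Polynomial.natDegree_X, Polynomial.natDegree_X_pow]
      omega
    omega
  set T : Finset K := Finset.univ.image (fun y : F => algebraMap F K y) with hT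
  have hTS : T ⊆ S := by
    intro z hz
    rw [hT, Finset.mem_image] at hz
    obtain ⟨y, _, rfl⟩ := hz
    rw [hS, Multiset.mem_toFinset]
    apply hroot
    rw [← map_pow, hq, FiniteField.pow_card]
  have hTcard : T.card = q := by
    rw [hT, Finset.card_image_of_injective _ (algebraMap F K).injective, Finset.card_univ]
  have hST : S = T := (Finset.eq_of_subset_of_card_le hTS (by omega)).symm
  have hxS : x ∈ S := by
    rw [hS, Multiset.mem_toFinset]
    exact hroot x hx
  rw [hST, hT, Finset.mem_image] at hxS
  obtain ⟨y, _, hy⟩ := hxS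
  exact ⟨y, hy⟩

/-- descent for coefficientwise-fixed polynomials -/
lemma exists_descent (f : MvPolynomial (Fin d) K)
    (hf : ∀ μ, (coeff μ f) ^ (Fintype.card F) = coeff μ f) :
    ∃ g : MvPolynomial (Fin d) F, MvPolynomial.map (algebraMap F K) g = f := by
  classical
  choose y hy using fun μ => mem_range_of_pow_card_fix (coeff μ f) (hf μ)
  refine ⟨∑ μ ∈ f.support, monomial μ (y μ), ?_⟩
  rw [map_sum]
  simp only [map_monomial, hy]
  exact f.support_sum_monomial_coeff

/-- The core factorization result: an irreducible homogeneous polynomial of prime degree `r`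
over a finite field which is not absolutely irreducible factors over the algebraic closure
into `r` conjugate linear forms. -/
theorem core_factorization (hr : r.Prime) (P : MvPolynomial (Fin d) F)
    (hP : P.IsHomogeneous r) (hirr : Irreducible P)
    (habs : ¬ Irreducible (MvPolynomial.map (algebraMap F K) P)) :
    ∃ (s : K →+* K) (c : K) (L : ℕ → Fin d → K),
      (∀ x : F, s (algebraMap F K x) = algebraMap F K x) ∧
      MvPolynomial.map (algebraMap F K) P
        = C c * ∏ i ∈ Finset.range r, (∑ j, C (L i j) * X j) ∧
      (∀ i j, L (i + 1) j = s (L i j)) ∧ (∀ j, L r j = L 0 j) := by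
  classical
  set q := Fintype.card F with hq
  obtain ⟨p, hp⟩ := CharP.exists F
  haveI := hp
  have hpprime : p.Prime := CharP.char_is_prime F p
  obtain ⟨n, -, hcard⟩ := FiniteField.card F p
  haveI : CharP K p := charP_of_injective_algebraMap (algebraMap F K).injective p
  haveI : ExpChar K p := ExpChar.prime hpprime
  set s : K →+* K := iterateFrobenius K p n with hsdef
  have hq2 : 2 ≤ q := Fintype.one_lt_card
  have hs : ∀ x : K, s x = x ^ q := by
    intro x
    rw [hsdef, iterateFrobenius_def, hq, hcard]
  have hsinj : Function.Injective s := s.injective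
  have hsfix : ∀ x : F, s (algebraMap F K x) = algebraMap F K x := by
    intro x
    rw [hs, ← map_pow, hq, FiniteField.pow_card]
  have hssurj : Function.Surjective s := by
    intro y
    obtain ⟨z, hz⟩ := IsAlgClosed.exists_pow_nat_eq y (n := q) (by omega)
    exact ⟨z, by rw [hs, hz]⟩
  set Q := MvPolynomial.map (algebraMap F K) P with hQdef
  have hPne : P ≠ 0 := hirr.ne_zero
  have hiq : Function.Injective (algebraMap F K) := (algebraMap F K).injective
  have hQne : Q ≠ 0 := by
    intro hcon
    exact hPne (MvPolynomial.map_injective _ hiq (by rw [map_zero, ← hQdef, hcon]))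
  have hr2 : 2 ≤ r := hr.two_le
  have hQhom : Q.IsHomogeneous r := hP.map _
  have hQdeg : Q.totalDegree = r := hQhom.totalDegree hQne
  have hQnotunit : ¬ IsUnit Q := by
    intro hu
    obtain ⟨cu, -, hcQ⟩ := MvPolynomial.exists_eq_C_of_isUnit hu
    rw [hcQ, totalDegree_C] at hQdeg
    omega
  obtain ⟨h, hhirr, hhdvd⟩ := WfDvdMonoid.exists_irreducible_factor hQnotunit hQne
  have hhne : h ≠ 0 := hhirr.ne_zero
  obtain ⟨μ0, hμ0⟩ := (MvPolynomial.support_nonempty).2 hhne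
  set a0 := coeff μ0 h with ha0def
  have ha0 : a0 ≠ 0 := MvPolynomial.mem_support_iff.1 hμ0
  set h0 := C (a0⁻¹) * h with hh0def
  have hCunit : IsUnit (C (a0⁻¹) : MvPolynomial (Fin d) K) :=
    IsUnit.map (C : K →+* MvPolynomial (Fin d) K) (IsUnit.mk0 _ (inv_ne_zero ha0))
  have hassoc0 : Associated h h0 := by
    refine ⟨hCunit.unit, ?_⟩
    rw [IsUnit.unit_spec, hh0def, mul_comm]
  have hh0irr : Irreducible h0 := hassoc0.irreducible hhirr
  have hh0dvd : h0 ∣ Q := (hassoc0.symm.dvd).trans hhdvd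
  have hh0ne : h0 ≠ 0 := hh0irr.ne_zero
  have hcoeffμ0 : coeff μ0 h0 = 1 := by
    rw [hh0def, coeff_C_mul, ← ha0def, inv_mul_cancel₀ ha0]
  -- the Frobenius orbit
  set T : MvPolynomial (Fin d) K → MvPolynomial (Fin d) K := fun f => MvPolynomial.map s f
    with hTdef
  set g : ℕ → MvPolynomial (Fin d) K := fun i => T^[i] h0 with hgdef
  have hg0 : g 0 = h0 := rfl
  have hgsucc : ∀ i, g (i + 1) = MvPolynomial.map s (g i) := by
    intro i
    rw [hgdef]
    simp only []
    rw [Function.iterate_succ_apply']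
  have hgpow : ∀ i ν, coeff ν (g i) = (coeff ν h0) ^ q ^ i := by
    intro i
    induction i with
    | zero => intro ν; rw [hg0, pow_zero, pow_one]
    | succ i ih =>
      intro ν
      rw [hgsucc, MvPolynomial.coeff_map, ih, hs, ← pow_mul, ← pow_succ]
  have hgμ0 : ∀ i, coeff μ0 (g i) = 1 := by
    intro i
    rw [hgpow, hcoeffμ0, one_pow]
  have hgne : ∀ i, g i ≠ 0 := by
    intro i hcon
    have := hgμ0 i
    rw [hcon] at this
    simp at this
  have hTQ : MvPolynomial.map s Q = Q := by
    rw [hQdef, MvPolynomial.map_map,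
      show s.comp (algebraMap F K) = algebraMap F K from RingHom.ext hsfix]
  have hgdvd : ∀ i, g i ∣ Q := by
    intro i
    induction i with
    | zero => rw [hg0]; exact hh0dvd
    | succ i ih =>
      rw [hgsucc, ← hTQ]
      exact map_dvd _ ih
  -- irreducibility is preserved by the Frobenius twist
  set se : K ≃+* K := RingEquiv.ofBijective s ⟨hsinj, hssurj⟩ with hsedef
  have hse : (MvPolynomial.mapEquiv (Fin d) se : MvPolynomial (Fin d) K ≃+* MvPolynomial (Fin d) K)
      = (MvPolynomial.map s : MvPolynomial (Fin d) K → MvPolynomial (Fin d) K) := by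
    funext f
    simp only [MvPolynomial.mapEquiv_apply]
    congr 1
  have hgirr : ∀ i, Irreducible (g i) := by
    intro i
    induction i with
    | zero => rw [hg0]; exact hh0irr
    | succ i ih =>
      rw [hgsucc, ← congrFun hse (g i)]
      exact (MulEquiv.irreducible_iff _).2 ih
  have hgdeg : ∀ i, (g i).totalDegree = h0.totalDegree := by
    intro i
    induction i with
    | zero => rw [hg0]
    | succ i ih =>
      rw [hgsucc, MvPolynomial.totalDegree_map_eq_of_injective hsinj, ih]
  -- existence of a period
  have hex : ∃ m, 0 < m ∧ g m = h0 := by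
    choose m hmpos hmfix using fun ν => exists_iterate_pow_card_fix (F := F) (coeff ν h0)
    refine ⟨∏ ν ∈ h0.support, m ν, ?_, ?_⟩
    · exact Finset.prod_pos fun ν _ => hmpos ν
    · have hiterfix : ∀ (x : K) (a : ℕ), x ^ q ^ a = x → ∀ k, x ^ q ^ (a * k) = x := by
        intro x a hxa k
        induction k with
        | zero => simp
        | succ k ih =>
          rw [Nat.mul_succ, pow_add, pow_mul, ih, hxa]
      ext ν
      rw [hgpow]
      by_cases hν : ν ∈ h0.support
      · obtain ⟨k, hk⟩ : m ν ∣ ∏ ν ∈ h0.support, m ν := Finset.dvd_prod_of_mem m hν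
        rw [hk]
        exact hiterfix _ _ (hmfix ν) k
      · have : coeff ν h0 = 0 := MvPolynomial.notMem_support_iff.1 hν
        rw [this, zero_pow]
        positivity
  set e := Nat.find hex with hedef
  obtain ⟨hepos, hge⟩ : 0 < e ∧ g e = h0 := Nat.find_spec hex
  have hemin : ∀ i, i < e → ¬(0 < i ∧ g i = h0) := fun i hi => Nat.find_min hex hi
  -- iterate injectivity
  have hTinj : Function.Injective (MvPolynomial.map s :
      MvPolynomial (Fin d) K → MvPolynomial (Fin d) K) := MvPolynomial.map_injective s hsinj
  have hgshift : ∀ i k, g (i + k) = T^[i] (g k) := by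
    intro i k
    rw [hgdef]
    simp only []
    rw [Function.iterate_add_apply]
  have hgcancel : ∀ i k, g (i + k) = g i → g k = h0 := by
    intro i k hik
    have h1 : T^[i] (g k) = T^[i] (g 0) := by
      rw [← hgshift, ← hgshift, Nat.add_zero, hik]
    have hTinj' : Function.Injective T := by
      rw [hTdef]
      exact hTinj
    exact (Function.Injective.iterate hTinj' i h1).trans hg0
  have hnassoc : ∀ i j, i < j → j < e → ¬ Associated (g i) (g j) := by
    intro i j hij hje hassoc
    obtain ⟨u, hu⟩ := hassoc
    obtain ⟨cu, -, hcu⟩ := MvPolynomial.exists_eq_C_of_isUnit u.isUnit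
    have hcoeffs : coeff μ0 (g i * (u : MvPolynomial (Fin d) K)) = coeff μ0 (g j) := by rw [hu]
    rw [hcu, mul_comm, coeff_C_mul, hgμ0, hgμ0, mul_one] at hcoeffs
    rw [hcu, hcoeffs, map_one, mul_one] at hu
    have hk : g (i + (j - i)) = g i := by
      rw [Nat.add_sub_cancel' (le_of_lt hij), hu]
    have := hgcancel i (j - i) hk
    exact hemin (j - i) (by omega) ⟨by omega, this⟩
  -- the product over the orbit divides Q
  set G : MvPolynomial (Fin d) K := ∏ i ∈ Finset.range e, g i with hGdef
  have hGne : G ≠ 0 := Finset.prod_ne_zero_iff.2 fun i _ => hgne i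
  have hGdvd : G ∣ Q := by
    have hprod : G = ((Multiset.range e).map g).prod := by
      rw [hGdef, Finset.prod_eq_multiset_prod, Finset.range_val]
    rw [hprod]
    apply Multiset.prod_primes_dvd
    · intro a ha
      obtain ⟨i, -, rfl⟩ := Multiset.mem_map.1 ha
      exact (UniqueFactorizationMonoid.irreducible_iff_prime).1 (hgirr i)
    · intro a ha
      obtain ⟨i, -, rfl⟩ := Multiset.mem_map.1 ha
      exact hgdvd i
    · intro a
      rw [Multiset.countP_map]
      have hrange : Multiset.range e = (Finset.range e).val := rfl
      rw [hrange, ← Finset.filter_val]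
      rw [Finset.card_val]
      rw [Finset.card_le_one]
      intro i hi j hj
      rw [Finset.mem_filter, Finset.mem_range] at hi hj
      rcases lt_trichotomy i j with hlt | heq | hgt
      · exact absurd (hi.2.symm.trans hj.2) (hnassoc i j hlt hj.1)
      · exact heq
      · exact absurd (hj.2.symm.trans hi.2) (hnassoc j i hgt hi.1)
  -- G is fixed by the twist
  have hTG : MvPolynomial.map s G = G := by
    have h1 : MvPolynomial.map s G = ∏ i ∈ Finset.range e, g (i + 1) := by
      rw [hGdef, map_prod]
      exact Finset.prod_congr rfl fun i _ => (hgsucc i).symm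
    have h2 : (∏ i ∈ Finset.range e, g (i + 1)) * g 0 = G * g e := by
      rw [← Finset.prod_range_succ', Finset.prod_range_succ, hGdef]
    rw [hge, ← hg0] at h2
    rw [h1]
    exact mul_right_cancel₀ (by rw [hg0]; exact hh0ne) h2
  -- descend G and the cofactor to F
  have hfixcoeff : ∀ (f : MvPolynomial (Fin d) K), MvPolynomial.map s f = f →
      ∀ μ, (coeff μ f) ^ q = coeff μ f := by
    intro f hfx μ
    have := congrArg (coeff μ) hfx
    rw [MvPolynomial.coeff_map, hs] at this
    exact this
  obtain ⟨GF, hGF⟩ := exists_descent G (hfixcoeff G hTG)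
  obtain ⟨Rq, hRq⟩ := hGdvd
  have hRne : Rq ≠ 0 := by
    intro hcon
    rw [hcon, mul_zero] at hRq
    exact hQne hRq
  have hTR : MvPolynomial.map s Rq = Rq := by
    have h1 : G * MvPolynomial.map s Rq = G * Rq := by
      conv_rhs => rw [← hRq]
      rw [← hTQ, hRq, map_mul, hTG]
    exact mul_left_cancel₀ hGne h1
  obtain ⟨RF, hRF⟩ := exists_descent Rq (hfixcoeff Rq hTR)
  have hPfact : P = GF * RF := by
    apply MvPolynomial.map_injective (algebraMap F K) hiq
    rw [map_mul, hGF, hRF, ← hRq, hQdef]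
  have hGFnotunit : ¬ IsUnit GF := by
    intro hu
    have hGu : IsUnit G := by
      rw [← hGF]
      exact hu.map _
    have hdvd0 : g 0 ∣ G := Finset.dvd_prod_of_mem g (Finset.mem_range.2 hepos)
    exact (hgirr 0).not_isUnit (isUnit_of_dvd_unit hdvd0 hGu)
  have hRFunit : IsUnit RF := (hirr.isUnit_or_isUnit hPfact).resolve_left hGFnotunit
  obtain ⟨cF, hcF0, hcFeq⟩ := MvPolynomial.exists_eq_C_of_isUnit hRFunit
  set c : K := algebraMap F K cF with hcdef
  have hc0 : c ≠ 0 := by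
    rw [hcdef]
    intro hcon
    exact hcF0 (hiq (by rw [map_zero]; exact hcon))
  have hQfact : Q = G * C c := by
    rw [hRq, hRF.symm, hcFeq, MvPolynomial.map_C, hcdef]
  -- degree bookkeeping
  set t := h0.totalDegree with htdef
  have hret : r = e * t := by
    have h1 : Q.totalDegree = G.totalDegree + (C c : MvPolynomial (Fin d) K).totalDegree := by
      rw [hQfact]
      exact MvPolynomial.totalDegree_mul_eq' hGne (fun hcon => hc0 (by
        have := congrArg (coeff 0) hcon
        rwa [coeff_C, if_pos rfl, MvPolynomial.coeff_zero] at this))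
    rw [totalDegree_C, Nat.add_zero, hQdeg] at h1
    have h2 : G.totalDegree = ∑ i ∈ Finset.range e, (g i).totalDegree := by
      rw [hGdef]
      exact MvPolynomial.totalDegree_prod_eq' hgne
    have h3 : ∑ i ∈ Finset.range e, (g i).totalDegree = e * t := by
      rw [Finset.sum_congr rfl fun i _ => hgdeg i, Finset.sum_const, Finset.card_range,
        smul_eq_mul]
    rw [h2, h3] at h1
    exact h1
  have hene1 : e ≠ 1 := by
    intro he1
    apply habs
    have hGh0 : G = h0 := by
      rw [hGdef, he1, Finset.prod_range_one, hg0]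
    have hassocQ : Associated h0 Q := by
      refine ⟨(IsUnit.map (C : K →+* MvPolynomial (Fin d) K) (IsUnit.mk0 c hc0)).unit, ?_⟩
      rw [IsUnit.unit_spec, ← hGh0, ← hQfact]
    rw [hQdef] at hassocQ
    exact hassocQ.irreducible hh0irr
  have htpos : t ≠ 0 := by
    intro ht0
    have := MvPolynomial.eq_C_of_totalDegree_eq_zero (htdef ▸ ht0)
    apply hh0irr.not_isUnit
    rw [this]
    apply IsUnit.map (C : K →+* MvPolynomial (Fin d) K)
    apply IsUnit.mk0
    intro hcon
    rw [hcon, map_zero] at this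
    exact hh0ne this
  have her : e = r := by
    rcases (Nat.Prime.eq_one_or_self_of_dvd hr e ⟨t, hret⟩) with h1 | h1
    · exact absurd h1 hene1
    · exact h1
  have ht1 : t = 1 := by
    rw [her] at hret
    by_contra hne
    rcases Nat.lt_or_ge t 1 with hlt | hge
    · have ht0 : t = 0 := by omega
      rw [ht0, Nat.mul_zero] at hret
      omega
    · have h2t : 2 ≤ t := by omega
      have hmul : r * 2 ≤ r * t := Nat.mul_le_mul_left r h2t
      linarith
  -- constant coefficients vanish
  have hccQ : constantCoeff Q = 0 := by
    rw [hQdef, constantCoeff_map]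
    have : constantCoeff P = 0 := by
      have := hP.coeff_eq_zero (d := 0) (by
        rw [map_zero]
        omega)
      rwa [MvPolynomial.constantCoeff_eq]
    rw [this, map_zero]
  have hcch0 : constantCoeff h0 = 0 := by
    have h1 : constantCoeff G * c = 0 := by
      have := congrArg constantCoeff hQfact
      rw [map_mul, constantCoeff_C] at this
      rw [hccQ] at this
      exact this.symm
    have h2 : constantCoeff G = 0 := by
      rcases mul_eq_zero.1 h1 with h | h
      · exact h
      · exact absurd h hc0
    have h3 : ∏ i ∈ Finset.range e, constantCoeff (g i) = 0 := by
      rw [← map_prod, ← hGdef, h2]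
    obtain ⟨i, -, hi⟩ := Finset.prod_eq_zero_iff.1 h3
    have h4 : constantCoeff (g i) = constantCoeff h0 ^ q ^ i := by
      rw [MvPolynomial.constantCoeff_eq]
      exact hgpow i 0
    rw [h4] at hi
    exact pow_eq_zero_iff (by positivity) |>.1 hi
  -- h0 is a linear form
  have hlin : h0 = ∑ j, C (coeff (Finsupp.single j 1) h0) * X j := by
    apply MvPolynomial.eq_linear_form
    · rw [← htdef, ht1]
    · rw [← MvPolynomial.constantCoeff_eq, hcch0]
  set L : ℕ → Fin d → K := fun i j => coeff (Finsupp.single j 1) h0 ^ q ^ i with hLdef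
  have hglin : ∀ i, g i = ∑ j, C (L i j) * X j := by
    intro i
    induction i with
    | zero =>
      rw [hg0, hLdef]
      simp only [pow_zero, pow_one]
      exact hlin
    | succ i ih =>
      rw [hgsucc, ih, map_sum]
      apply Finset.sum_congr rfl
      intro j _
      rw [map_mul, MvPolynomial.map_C, MvPolynomial.map_X, hs, hLdef]
      simp only []
      rw [← pow_mul, ← pow_succ]
  refine ⟨s, c, L, hsfix, ?_, ?_, ?_⟩
  · rw [hQfact, mul_comm]
    congr 1
    rw [← her]
    exact Finset.prod_congr rfl fun i _ => hglin i
  · intro i j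
    rw [hs, hLdef]
    simp only []
    rw [← pow_mul, ← pow_succ]
  · intro j
    have h1 : coeff (Finsupp.single j 1) (g r) = coeff (Finsupp.single j 1) h0 := by
      rw [← her, hge]
    rw [hgpow] at h1
    rw [hLdef]
    simp only []
    rw [h1, pow_zero, pow_one]


end Core

section Main

/-- The determinantal polynomial of a tuple of `n × n` matrices. -/
noncomputable def detPoly {F : Type*} [Field F] {n d : ℕ}
    (b : Fin d → Matrix (Fin n) (Fin n) F) : MvPolynomial (Fin d) F :=
  Matrix.det (Matrix.of fun i j => ∑ k, X k * C (b k i j))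

theorem detPoly_isHomogeneous {F : Type*} [Field F] {n d : ℕ}
    (b : Fin d → Matrix (Fin n) (Fin n) F) : (detPoly b).IsHomogeneous n := by
  rw [detPoly, Matrix.det_apply]
  apply MvPolynomial.IsHomogeneous.sum
  intro σ _
  have hent : ∀ i j : Fin n,
      ((Matrix.of fun i j => ∑ k, X k * C (b k i j)) i j).IsHomogeneous 1 := by
    intro i j
    rw [Matrix.of_apply]
    apply MvPolynomial.IsHomogeneous.sum
    intro k _
    rw [mul_comm]
    exact MvPolynomial.isHomogeneous_C_mul_X _ _
  have hprod : (∏ i, (Matrix.of fun i j => ∑ k, X k * C (b k i j)) (σ i) i).IsHomogeneous n := by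
    have := MvPolynomial.IsHomogeneous.prod Finset.univ
      (fun i => (Matrix.of fun i j => ∑ k, X k * C (b k i j)) (σ i) i) (fun _ => 1)
      (fun i _ => hent (σ i) i)
    simpa using this
  rcases Int.units_eq_one_or (Equiv.Perm.sign σ) with h | h
  · rw [h, one_smul]
    exact hprod
  · rw [h, Units.smul_def]
    push_cast
    rw [neg_one_zsmul]
    exact hprod.neg

theorem eval₂_detPoly {F : Type*} [Field F] {n d : ℕ}
    (b : Fin d → Matrix (Fin n) (Fin n) F) {R : Type*} [CommRing R]
    (φ : F →+* R) (w : Fin d → R) :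
    eval₂ φ w (detPoly b)
      = Matrix.det (Matrix.of fun i j => ∑ k, w k * φ (b k i j)) := by
  rw [detPoly]
  have h1 : eval₂ φ w (Matrix.det (Matrix.of fun i j => ∑ k, X k * C (b k i j)))
      = ((eval₂Hom φ w).mapMatrix (Matrix.of fun i j => ∑ k, X k * C (b k i j))).det := by
    rw [← RingHom.map_det]
    rfl
  rw [h1]
  congr 1
  ext i j
  simp [mul_comm]

theorem stmt6 {F : Type*} [Field F] [Fintype F] {r d : ℕ} (hr : r.Prime)
    (M : Submodule F (Matrix (Fin r) (Fin r) F))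
    (b : Module.Basis (Fin d) F M)
    (hirr : Irreducible (detPoly (fun k => (b k : Matrix (Fin r) (Fin r) F))))
    (habs : ¬ Irreducible (MvPolynomial.map (algebraMap F (AlgebraicClosure F))
      (detPoly (fun k => (b k : Matrix (Fin r) (Fin r) F)))))
    (A B : Matrix (Fin r) (Fin r) F) (hA : A ∈ M) (hB : B ∈ M)
    (hdA : Matrix.det A ≠ 0) (hdB : Matrix.det B = 0) :
    IsNilpotent (A⁻¹ * B) := by
  classical
  set K := AlgebraicClosure F with hKdef
  set φ : F →+* K := algebraMap F K with hφdef
  have hφinj : Function.Injective φ := φ.injective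
  set Mk : Fin d → Matrix (Fin r) (Fin r) F := fun k => (b k : Matrix (Fin r) (Fin r) F)
    with hMkdef
  obtain ⟨s, c, L, hsfix, hfact, hLsucc, hLwrap⟩ :=
    core_factorization hr (detPoly Mk) (detPoly_isHomogeneous Mk) hirr habs
  -- coordinates of A and B
  set av : Fin d → F := fun k => b.repr ⟨A, hA⟩ k with havdef
  set bv : Fin d → F := fun k => b.repr ⟨B, hB⟩ k with hbvdef
  have hAsum : A = ∑ k, av k • Mk k := by
    have h1 := b.sum_repr ⟨A, hA⟩
    have h2 := congrArg (fun v : M => (v : Matrix (Fin r) (Fin r) F)) h1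
    simp only [Submodule.coe_sum, SetLike.val_smul] at h2
    exact h2.symm
  have hBsum : B = ∑ k, bv k • Mk k := by
    have h1 := b.sum_repr ⟨B, hB⟩
    have h2 := congrArg (fun v : M => (v : Matrix (Fin r) (Fin r) F)) h1
    simp only [Submodule.coe_sum, SetLike.val_smul] at h2
    exact h2.symm
  -- evaluation of the determinantal polynomial over K
  have heval : ∀ w : Fin d → K,
      eval w (MvPolynomial.map φ (detPoly Mk))
        = Matrix.det (Matrix.of fun i j => ∑ k, w k * φ (Mk k i j)) := by
    intro w
    rw [MvPolynomial.eval_map]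
    exact eval₂_detPoly Mk φ w
  -- evaluation of the factorized side
  set α : ℕ → K := fun i => ∑ j, L i j * φ (av j) with hαdef
  set β : ℕ → K := fun i => ∑ j, L i j * φ (bv j) with hβdef
  have hevalfact : ∀ w : Fin d → K,
      eval w (MvPolynomial.map φ (detPoly Mk))
        = c * ∏ i ∈ Finset.range r, (∑ j, L i j * w j) := by
    intro w
    rw [hfact]
    rw [map_mul, eval_C, map_prod]
    congr 1
    apply Finset.prod_congr rfl
    intro i _
    rw [map_sum]
    apply Finset.sum_congr rfl
    intro j _
    rw [map_mul, eval_C, eval_X]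
  -- determinant identities
  set A' : Matrix (Fin r) (Fin r) K := A.map φ with hA'def
  set B' : Matrix (Fin r) (Fin r) K := B.map φ with hB'def
  have hsumentry : ∀ (C0 : Matrix (Fin r) (Fin r) F) (cv : Fin d → F),
      C0 = ∑ k, cv k • Mk k → ∀ i j, φ (C0 i j) = ∑ k, φ (cv k) * φ (Mk k i j) := by
    intro C0 cv hC0 i j
    rw [hC0]
    rw [show (∑ k, cv k • Mk k) i j = ∑ k, cv k * Mk k i j by
      rw [Matrix.sum_apply]
      apply Finset.sum_congr rfl
      intro k _
      rw [Matrix.smul_apply, smul_eq_mul]]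
    rw [map_sum]
    apply Finset.sum_congr rfl
    intro k _
    rw [map_mul]
  have hdetA' : Matrix.det A' = φ (Matrix.det A) := by
    rw [hA'def, RingHom.map_det, RingHom.mapMatrix_apply]
  have hdetB' : Matrix.det B' = φ (Matrix.det B) := by
    rw [hB'def, RingHom.map_det, RingHom.mapMatrix_apply]
  -- c * ∏ α = det A ≠ 0
  have hαeq : c * ∏ i ∈ Finset.range r, α i = φ (Matrix.det A) := by
    have h2 := heval (fun k => φ (av k))
    rw [hevalfact] at h2
    have hmat : (Matrix.of fun i j => ∑ k, φ (av k) * φ (Mk k i j)) = A' := by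
      ext i j
      rw [Matrix.of_apply, ← hsumentry A av hAsum i j, hA'def, Matrix.map_apply]
    rw [hmat, hdetA'] at h2
    exact h2
  have hβeq : c * ∏ i ∈ Finset.range r, β i = φ (Matrix.det B) := by
    have h2 := heval (fun k => φ (bv k))
    rw [hevalfact] at h2
    have hmat : (Matrix.of fun i j => ∑ k, φ (bv k) * φ (Mk k i j)) = B' := by
      ext i j
      rw [Matrix.of_apply, ← hsumentry B bv hBsum i j, hB'def, Matrix.map_apply]
    rw [hmat, hdetB'] at h2
    exact h2
  have hdetAne : φ (Matrix.det A) ≠ 0 := fun hcon => hdA (hφinj (by rw [map_zero]; exact hcon))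
  have hcne : c ≠ 0 := by
    intro hcon
    rw [hcon, zero_mul] at hαeq
    exact hdetAne hαeq.symm
  -- all β i vanish
  have hβsucc : ∀ i, β (i + 1) = s (β i) := by
    intro i
    rw [hβdef]
    simp only []
    rw [map_sum]
    apply Finset.sum_congr rfl
    intro j _
    rw [map_mul, hsfix, hLsucc]
  have hβwrap : β r = β 0 := by
    rw [hβdef]
    simp only []
    exact Finset.sum_congr rfl fun j _ => by rw [hLwrap]
  have hβzero : ∀ i, β i = 0 := by
    have hprod0 : ∏ i ∈ Finset.range r, β i = 0 := by
      rw [hdB, map_zero] at hβeq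
      rcases mul_eq_zero.1 hβeq with h | h
      · exact absurd h hcne
      · exact h
    obtain ⟨i0, hi0r, hi0⟩ := Finset.prod_eq_zero_iff.1 hprod0
    have hfwd : ∀ m, β (i0 + m) = 0 := by
      intro m
      induction m with
      | zero => exact hi0
      | succ m ih =>
        rw [← Nat.add_assoc, hβsucc, ih, map_zero]
    have hβr : β r = 0 := by
      have := hfwd (r - (i0 : ℕ))
      rwa [Nat.add_sub_cancel' (le_of_lt (Finset.mem_range.1 hi0r))] at this
    have hβ0 : β 0 = 0 := by rw [← hβwrap]; exact hβr
    intro i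
    induction i with
    | zero => exact hβ0
    | succ i ih => rw [hβsucc, ih, map_zero]
  -- the key determinant identity
  have hkey : ∀ t : K, Matrix.det (A' + t • B') = φ (Matrix.det A) := by
    intro t
    have h2 := heval (fun k => φ (av k) + t * φ (bv k))
    rw [hevalfact] at h2
    have hmat : (Matrix.of fun i j => ∑ k, (φ (av k) + t * φ (bv k)) * φ (Mk k i j))
        = A' + t • B' := by
      ext i j
      rw [Matrix.of_apply, Matrix.add_apply, Matrix.smul_apply, hA'def, hB'def,
        Matrix.map_apply, Matrix.map_apply, hsumentry A av hAsum i j,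
        hsumentry B bv hBsum i j, smul_eq_mul, Finset.mul_sum, ← Finset.sum_add_distrib]
      apply Finset.sum_congr rfl
      intro k _
      ring
    rw [hmat] at h2
    have h3 : Matrix.det (A' + t • B') = c * ∏ i ∈ Finset.range r,
        (∑ j, L i j * (φ (av j) + t * φ (bv j))) := h2.symm
    rw [h3, ← hαeq]
    congr 1
    apply Finset.prod_congr rfl
    intro i _
    have : (∑ j, L i j * (φ (av j) + t * φ (bv j))) = α i + t * β i := by
      rw [hαdef, hβdef]
      simp only []
      rw [Finset.mul_sum, ← Finset.sum_add_distrib]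
      apply Finset.sum_congr rfl
      intro j _
      ring
    rw [this, hβzero i, mul_zero, add_zero]
  -- conclude nilpotency via the characteristic polynomial
  have hdAu : IsUnit (Matrix.det A) := (Ne.isUnit hdA)
  set N : Matrix (Fin r) (Fin r) F := A⁻¹ * B with hNdef
  set N' : Matrix (Fin r) (Fin r) K := φ.mapMatrix N with hN'def
  have hAN : A' * N' = B' := by
    rw [hA'def, hN'def, hB'def, RingHom.mapMatrix_apply, ← Matrix.map_mul, hNdef,
      ← Matrix.mul_assoc, Matrix.mul_nonsing_inv A hdAu, Matrix.one_mul]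
  have hcpeval : ∀ x : K, (Matrix.charpoly N').eval x = Matrix.det (x • (1 : Matrix (Fin r) (Fin r) K) - N') := by
    intro x
    rw [Matrix.charpoly]
    have h := RingHom.map_det (Polynomial.evalRingHom x) (Matrix.charmatrix N')
    simp only [Polynomial.coe_evalRingHom] at h
    rw [h]
    congr 1
    ext i j
    rw [RingHom.mapMatrix_apply, Matrix.map_apply, Matrix.charmatrix_apply]
    by_cases hij : i = j
    · subst hij
      simp [Matrix.one_apply]
    · simp [Matrix.diagonal_apply_ne _ hij, Matrix.one_apply_ne hij]
  have hcp : Matrix.charpoly N' = Polynomial.X ^ r := by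
    have hroots : ∀ x : K, x ≠ 0 → (Matrix.charpoly N' - Polynomial.X ^ r).eval x = 0 := by
      intro x hx
      have h1 : A' * (x • (1 : Matrix (Fin r) (Fin r) K) - N') = x • A' - B' := by
        rw [Matrix.mul_sub, Matrix.mul_smul, Matrix.mul_one, hAN]
      have h2 : x • A' - B' = x • (A' + (-x⁻¹) • B') := by
        rw [smul_add, smul_smul]
        rw [show x * -x⁻¹ = -1 by rw [mul_neg, mul_inv_cancel₀ hx]]
        rw [neg_one_smul, sub_eq_add_neg]
      have h3 : Matrix.det (x • A' - B') = x ^ r * φ (Matrix.det A) := by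
        rw [h2, Matrix.det_smul, hkey (-x⁻¹), Fintype.card_fin]
      have h4 : Matrix.det A' * Matrix.det (x • (1 : Matrix (Fin r) (Fin r) K) - N')
          = x ^ r * φ (Matrix.det A) := by
        rw [← Matrix.det_mul, h1, h3]
      rw [hdetA'] at h4
      have h5 : Matrix.det (x • (1 : Matrix (Fin r) (Fin r) K) - N') = x ^ r := by
        apply mul_left_cancel₀ hdetAne
        rw [h4]
        ring
      rw [Polynomial.eval_sub, hcpeval, h5, Polynomial.eval_pow, Polynomial.eval_X, sub_self]
    have hinf : {x : K | (Matrix.charpoly N' - Polynomial.X ^ r).IsRoot x}.Infinite := by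
      apply Set.Infinite.mono (s := ({0}ᶜ : Set K))
      · intro x hx
        exact hroots x (by simpa using hx)
      · exact (Set.finite_singleton (0 : K)).infinite_compl
    have h6 : Matrix.charpoly N' - Polynomial.X ^ r = 0 :=
      Polynomial.eq_zero_of_infinite_isRoot _ hinf
    exact sub_eq_zero.1 h6
  have hN'pow : N' ^ r = 0 := by
    have := Matrix.aeval_self_charpoly N'
    rw [hcp] at this
    rwa [map_pow, Polynomial.aeval_X] at this
  refine ⟨r, ?_⟩
  have h7 : φ.mapMatrix (N ^ r) = 0 := by
    rw [map_pow]
    exact hN'pow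
  have hminj : Function.Injective (φ.mapMatrix :
      Matrix (Fin r) (Fin r) F → Matrix (Fin r) (Fin r) K) := by
    intro X Y hXY
    ext i j
    apply hφinj
    have := congrArg (fun (Z : Matrix (Fin r) (Fin r) K) => Z i j) hXY
    simpa using this
  apply hminj
  rw [h7, map_zero]


end Main
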